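/- arXiv:0911.0434 — 2 statements merged into one kernel-verified Lean document; each statement's English description precedes it below -/
import Mathlib

section
/- Let Λ be a positive semidefinite Hermitian n×n matrix with trace 1, and let Θ(Λ) := ∫_{-π}^{π} Λ^{1/2} G(e^{jθ}) (Ψ(e^{jθ}) / (G(e^{jθ})* Λ G(e^{jθ}))) G(e^{jθ})* Λ^{1/2} dθ/(2π), where G(z) = (zI - A)^{-1}B, Ψ is a continuous strictly positive function on the unit circle with ∫Ψ dθ/(2π) = 1, and G*ΛG > 0 on the unit circle. Then Θ(Λ) is positive semidefinite Hermitian with trace 1. -/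
open Matrix MeasureTheory Real Filter
open scoped ComplexOrder

noncomputable section

abbrev Mat (n : ℕ) := Matrix (Fin n) (Fin n) ℂ
abbrev Vec (n : ℕ) := Matrix (Fin n) (Fin 1) ℂ

/-- the point e^{jθ} on the unit circle -/
def circPt (θ : ℝ) : ℂ := Complex.exp (θ * Complex.I)

/-- G(e^{jθ}) = (e^{jθ} I - A)⁻¹ B -/
def Gm {n : ℕ} (A : Mat n) (B : Vec n) (θ : ℝ) : Vec n :=
  (circPt θ • (1 : Mat n) - A)⁻¹ * B

/-- the scalar G* Λ G at e^{jθ} -/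
def quad {n : ℕ} (A : Mat n) (B : Vec n) (Λ : Mat n) (θ : ℝ) : ℂ :=
  ((Gm A B θ)ᴴ * Λ * Gm A B θ) 0 0

/-- normalized entrywise matrix integral over the unit circle -/
def mInt {n : ℕ} (f : ℝ → Mat n) : Mat n :=
  Matrix.of fun i j => (1 / (2 * π) : ℝ) • ∫ θ in (0:ℝ)..(2 * π), f θ i j

/-- normalized scalar (complex) integral over the unit circle -/
def sInt (f : ℝ → ℂ) : ℂ := (1 / (2 * π) : ℝ) • ∫ θ in (0:ℝ)..(2 * π), f θ

/-- normalized scalar (real) integral over the unit circle -/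
def sIntR (f : ℝ → ℝ) : ℝ := (1 / (2 * π)) * ∫ θ in (0:ℝ)..(2 * π), f θ

/-- all eigenvalues of A lie in the open unit disc -/
def IsStable {n : ℕ} (A : Mat n) : Prop := ∀ μ ∈ spectrum ℂ A, ‖μ‖ < 1

/-- (A,B) is a reachable pair: the controllability matrix has full rank -/
def Reachable {n : ℕ} (A : Mat n) (B : Vec n) : Prop :=
  (Matrix.of fun (i : Fin n) (k : Fin n) => (A ^ (k : ℕ) * B) i 0).rank = n

open scoped Classical in
/-- positive semidefinite square root (junk value 0 off the psd cone) -/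
def msqrt {n : ℕ} (M : Mat n) : Mat n :=
  if h : M.PosSemidef then
    h.1.eigenvectorUnitary.1 * diagonal ((↑) ∘ (√·) ∘ h.1.eigenvalues) *
      (star h.1.eigenvectorUnitary : Mat n)
  else 0

/-- the moment map ∫ G (Ψ/(G*ΛG)) G* -/
def moment {n : ℕ} (A : Mat n) (B : Vec n) (Ψ : ℝ → ℝ) (Λ : Mat n) : Mat n :=
  mInt (fun θ => ((Ψ θ : ℂ) / quad A B Λ θ) • (Gm A B θ * (Gm A B θ)ᴴ))

/-- the iteration map Θ(Λ) = ∫ Λ^{1/2} G (Ψ/(G*ΛG)) G* Λ^{1/2} -/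
def Theta {n : ℕ} (A : Mat n) (B : Vec n) (Ψ : ℝ → ℝ) (Λ : Mat n) : Mat n :=
  mInt (fun θ => ((Ψ θ : ℂ) / quad A B Λ θ) •
    (msqrt Λ * (Gm A B θ * (Gm A B θ)ᴴ) * msqrt Λ))

/-- the linearization M of Θ at Λ:
M(X) = X - Λ^{1/2} ∫ (GΨG*/(G*ΛG)) (G*XG/(G*ΛG)) Λ^{1/2} -/
def Mlin {n : ℕ} (A : Mat n) (B : Vec n) (Ψ : ℝ → ℝ) (Λ : Mat n) (X : Mat n) : Mat n :=
  X - msqrt Λ * mInt (fun θ =>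
    (((Ψ θ : ℂ) * (((Gm A B θ)ᴴ * X * Gm A B θ) 0 0)) / (quad A B Λ θ) ^ 2) •
      (Gm A B θ * (Gm A B θ)ᴴ)) * msqrt Λ

/-- the range of the operator Γ : Φ ↦ ∫ G Φ G* on continuous (2π-periodic) functions -/
def RangeGamma {n : ℕ} (A : Mat n) (B : Vec n) : Set (Mat n) :=
  {M | ∃ Φ : ℝ → ℝ, Continuous Φ ∧ (∀ θ, Φ (θ + 2 * π) = Φ θ) ∧
    M = mInt (fun θ => (Φ θ : ℂ) • (Gm A B θ * (Gm A B θ)ᴴ))}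


/-! ### Auxiliary lemmas -/

section Aux
open intervalIntegral
variable {n : ℕ}

lemma two_pi_pos' : (0:ℝ) < 2 * π := by positivity

lemma continuous_circPt : Continuous circPt := by
  unfold circPt; fun_prop

lemma isUnit_circ (A : Mat n) (hA : IsStable A) (θ : ℝ) :
    IsUnit (circPt θ • (1 : Mat n) - A) := by
  by_contra h
  have hmem : circPt θ ∈ spectrum ℂ A := by
    rw [spectrum.mem_iff]
    simpa [Algebra.algebraMap_eq_smul_one] using h
  have hlt := hA _ hmem
  have habs : ‖circPt θ‖ = 1 := by
    simp [circPt, Complex.norm_exp]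
  rw [habs] at hlt
  exact lt_irrefl _ hlt

lemma det_circ_ne (A : Mat n) (hA : IsStable A) (θ : ℝ) :
    (circPt θ • (1 : Mat n) - A).det ≠ 0 := by
  have h := (Matrix.isUnit_iff_isUnit_det _).mp (isUnit_circ A hA θ)
  exact h.ne_zero

lemma continuous_Gm (A : Mat n) (B : Vec n) (hA : IsStable A) :
    Continuous (Gm A B) := by
  have hM : Continuous (fun θ => circPt θ • (1 : Mat n) - A) :=
    (continuous_circPt.smul continuous_const).sub continuous_const
  have hinv : Continuous (fun θ => (circPt θ • (1 : Mat n) - A)⁻¹) := by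
    simp only [Matrix.inv_def, Ring.inverse_eq_inv']
    exact (hM.matrix_det.inv₀ (det_circ_ne A hA)).smul hM.matrix_adjugate
  unfold Gm
  exact hinv.matrix_mul continuous_const

lemma continuous_quad (A : Mat n) (B : Vec n) (Λ : Mat n) (hA : IsStable A) :
    Continuous (quad A B Λ) := by
  have hG := continuous_Gm A B hA
  unfold quad
  exact ((hG.matrix_conjTranspose.matrix_mul continuous_const).matrix_mul hG).matrix_elem 0 0

lemma quad_conj (A : Mat n) (B : Vec n) {Λ : Mat n} (hΛ : Λ.PosSemidef) (θ : ℝ) :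
    (starRingEnd ℂ) (quad A B Λ θ) = quad A B Λ θ := by
  have h : ((Gm A B θ)ᴴ * Λ * Gm A B θ).IsHermitian :=
    Matrix.isHermitian_conjTranspose_mul_mul _ hΛ.1
  have := congrFun (congrFun h 0) 0
  simpa [Matrix.conjTranspose_apply, quad] using this

lemma quad_eq_re (A : Mat n) (B : Vec n) {Λ : Mat n} (hΛ : Λ.PosSemidef) (θ : ℝ) :
    quad A B Λ θ = ((quad A B Λ θ).re : ℂ) :=
  (Complex.conj_eq_iff_re.mp (quad_conj A B hΛ θ)).symm

lemma smul_posSemidef {c : ℂ} (hc : 0 ≤ c) {M : Mat n} (hM : M.PosSemidef) :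
    (c • M).PosSemidef := by
  have him : c.im = 0 := (Complex.nonneg_iff.mp hc).2.symm
  rw [Matrix.posSemidef_iff_dotProduct_mulVec]
  constructor
  · have : (starRingEnd ℂ) c = c := Complex.conj_eq_iff_im.mpr him
    unfold Matrix.IsHermitian
    rw [Matrix.conjTranspose_smul, hM.1, Complex.star_def, this]
  · intro x
    have h1 : star x ⬝ᵥ (c • M) *ᵥ x = c * (star x ⬝ᵥ M *ᵥ x) := by
      rw [Matrix.smul_mulVec, dotProduct_smul, smul_eq_mul]
    rw [h1]
    exact mul_nonneg hc (hM.dotProduct_mulVec_nonneg x)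

lemma star_intervalIntegral (g : ℝ → ℂ) :
    star (∫ θ in (0:ℝ)..(2*π), g θ) = ∫ θ in (0:ℝ)..(2*π), star (g θ) := by
  rw [intervalIntegral.integral_of_le two_pi_pos'.le,
    intervalIntegral.integral_of_le two_pi_pos'.le]
  exact (integral_conj (f := g)).symm

lemma mInt_isHermitian {f : ℝ → Mat n} (hf : ∀ θ, (f θ).IsHermitian) :
    (mInt f).IsHermitian := by
  refine Matrix.ext fun i j => ?_
  simp only [Matrix.conjTranspose_apply, mInt, Matrix.of_apply]
  rw [star_smul, star_trivial, star_intervalIntegral]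
  congr 1
  refine intervalIntegral.integral_congr fun θ _ => ?_
  exact (hf θ).apply i j

lemma mInt_entry {f : ℝ → Mat n} (i j : Fin n) :
    mInt f i j = (1/(2*π) : ℝ) • ∫ θ in (0:ℝ)..(2*π), f θ i j := rfl

lemma intervalIntegrable_sum' {m : ℕ} {g : Fin m → ℝ → ℂ}
    (h : ∀ j, IntervalIntegrable (g j) MeasureTheory.volume 0 (2*π)) :
    IntervalIntegrable (fun θ => ∑ j, g j θ) MeasureTheory.volume 0 (2*π) := by
  have h2 := IntervalIntegrable.sum Finset.univ (fun j (_ : j ∈ Finset.univ) => h j)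
  rwa [show (∑ j, g j) = fun θ => ∑ j, g j θ from funext fun θ => Finset.sum_apply θ _ _] at h2

lemma integ_swap {g : Fin n → Fin n → ℝ → ℂ}
    (h : ∀ i j, IntervalIntegrable (g i j) MeasureTheory.volume 0 (2*π)) :
    (∫ θ in (0:ℝ)..(2*π), ∑ i, ∑ j, g i j θ)
      = ∑ i, ∑ j, ∫ θ in (0:ℝ)..(2*π), g i j θ := by
  rw [intervalIntegral.integral_finset_sum
    (fun (i : Fin n) _ => intervalIntegrable_sum' (fun j => h i j))]
  exact Finset.sum_congr rfl fun i _ =>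
    intervalIntegral.integral_finset_sum (fun j _ => h i j)

set_option maxHeartbeats 1000000 in
lemma mInt_dot {f : ℝ → Mat n}
    (hi : ∀ i j, IntervalIntegrable (fun θ => f θ i j) MeasureTheory.volume 0 (2*π))
    (x : Fin n → ℂ) :
    star x ⬝ᵥ (mInt f) *ᵥ x
      = (1/(2*π) : ℝ) • ∫ θ in (0:ℝ)..(2*π), star x ⬝ᵥ (f θ) *ᵥ x := by
  have key : ∀ (M : Mat n), star x ⬝ᵥ M *ᵥ x = ∑ i, ∑ j, star (x i) * M i j * x j := by
    intro M
    simp [dotProduct, Matrix.mulVec, Finset.mul_sum, mul_assoc]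
  have hterm : ∀ i j, IntervalIntegrable (fun θ => star (x i) * f θ i j * x j)
      MeasureTheory.volume 0 (2*π) := fun i j =>
    IntervalIntegrable.mul_const (IntervalIntegrable.const_mul (hi i j) (star (x i))) (x j)
  calc star x ⬝ᵥ (mInt f) *ᵥ x
      = ∑ i, ∑ j, star (x i) * (mInt f) i j * x j := key _
    _ = ∑ i, ∑ j, (1/(2*π) : ℝ) • ∫ θ in (0:ℝ)..(2*π), star (x i) * f θ i j * x j := by
        refine Finset.sum_congr rfl fun i _ => Finset.sum_congr rfl fun j _ => ?_
        rw [mInt_entry, intervalIntegral.integral_mul_const, intervalIntegral.integral_const_mul,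
          mul_smul_comm, smul_mul_assoc]
    _ = (1/(2*π) : ℝ) • ∑ i, ∑ j, ∫ θ in (0:ℝ)..(2*π), star (x i) * f θ i j * x j := by
        rw [Finset.smul_sum]
        exact Finset.sum_congr rfl fun i _ => (Finset.smul_sum).symm
    _ = (1/(2*π) : ℝ) • ∫ θ in (0:ℝ)..(2*π), ∑ i, ∑ j, star (x i) * f θ i j * x j := by
        rw [integ_swap hterm]
    _ = (1/(2*π) : ℝ) • ∫ θ in (0:ℝ)..(2*π), star x ⬝ᵥ (f θ) *ᵥ x := by
        congr 1
        refine intervalIntegral.integral_congr fun θ _ => ?_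
        exact (key (f θ)).symm

lemma mInt_posSemidef {f : ℝ → Mat n}
    (hi : ∀ i j, IntervalIntegrable (fun θ => f θ i j) MeasureTheory.volume 0 (2*π))
    (hf : ∀ θ, (f θ).PosSemidef) : (mInt f).PosSemidef := by
  refine Matrix.posSemidef_iff_dotProduct_mulVec.mpr ⟨mInt_isHermitian fun θ => (hf θ).1, fun x => ?_⟩
  rw [mInt_dot hi x]
  set z : ℝ → ℂ := fun θ => star x ⬝ᵥ (f θ) *ᵥ x with hz
  have hznn : ∀ θ, 0 ≤ z θ := fun θ => (hf θ).dotProduct_mulVec_nonneg x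
  have hzre : ∀ θ, z θ = ((z θ).re : ℂ) := by
    intro θ
    have := (Complex.nonneg_iff.mp (hznn θ)).2
    exact (Complex.re_add_im (z θ)) ▸ by rw [← this]; simp
  have : ∫ θ in (0:ℝ)..(2*π), z θ = (((∫ θ in (0:ℝ)..(2*π), (z θ).re) : ℝ) : ℂ) := by
    rw [← intervalIntegral.integral_ofReal]
    exact intervalIntegral.integral_congr fun θ _ => hzre θ
  rw [this, Complex.real_smul, ← Complex.ofReal_mul]
  rw [Complex.zero_le_real]
  have hre : 0 ≤ ∫ θ in (0:ℝ)..(2*π), (z θ).re :=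
    intervalIntegral.integral_nonneg two_pi_pos'.le
      (fun θ _ => (Complex.nonneg_iff.mp (hznn θ)).1)
  positivity

lemma mInt_trace {f : ℝ → Mat n}
    (hi : ∀ i j, IntervalIntegrable (fun θ => f θ i j) MeasureTheory.volume 0 (2*π)) :
    (mInt f).trace = (1/(2*π) : ℝ) • ∫ θ in (0:ℝ)..(2*π), (f θ).trace := by
  simp only [Matrix.trace, Matrix.diag]
  rw [intervalIntegral.integral_finset_sum fun i _ => hi i i, Finset.smul_sum]
  rfl

lemma msqrt_posSemidef {n : ℕ} {M : Mat n} (hM : M.PosSemidef) : (msqrt M).PosSemidef := by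
  classical
  unfold msqrt
  rw [dif_pos hM]
  have hD : (diagonal ((↑) ∘ (√·) ∘ hM.1.eigenvalues) : Mat n).PosSemidef :=
    Matrix.posSemidef_diagonal_iff.mpr fun i => by
      simp only [Function.comp_apply]
      exact Complex.zero_le_real.mpr (Real.sqrt_nonneg _)
  have := hD.mul_mul_conjTranspose_same (hM.1.eigenvectorUnitary.1)
  simpa [Matrix.star_eq_conjTranspose] using this

lemma msqrt_mul_self {n : ℕ} {M : Mat n} (hM : M.PosSemidef) : msqrt M * msqrt M = M := by
  classical
  unfold msqrt
  rw [dif_pos hM]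
  set U := hM.1.eigenvectorUnitary
  have hU : (star U : Mat n) * U.1 = 1 := Unitary.coe_star_mul_self U
  have hsp := hM.1.spectral_theorem
  rw [Unitary.conjStarAlgAut_apply] at hsp
  calc U.1 * diagonal ((↑) ∘ (√·) ∘ hM.1.eigenvalues) * (star U : Mat n) *
        (U.1 * diagonal ((↑) ∘ (√·) ∘ hM.1.eigenvalues) * (star U : Mat n))
      = U.1 * (diagonal ((↑) ∘ (√·) ∘ hM.1.eigenvalues) * ((star U : Mat n) * U.1) *
        diagonal ((↑) ∘ (√·) ∘ hM.1.eigenvalues)) * (star U : Mat n) := by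
        simp only [Matrix.mul_assoc]
    _ = U.1 * diagonal (RCLike.ofReal ∘ hM.1.eigenvalues) * (star U : Mat n) := by
        rw [hU, Matrix.mul_one, diagonal_mul_diagonal]
        congr 3
        funext i
        simp only [Function.comp_apply]
        rw [← Complex.ofReal_mul, Real.mul_self_sqrt (hM.eigenvalues_nonneg i)]
        rfl
    _ = M := hsp.symm

end Aux

/-- Θ maps density matrices to density matrices. -/
theorem stmt1 {n : ℕ} (A : Mat n) (B : Vec n) (Ψ : ℝ → ℝ) (Λ : Mat n)
    (hA : IsStable A) (hR : Reachable A B)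
    (hΨc : Continuous Ψ) (hΨpos : ∀ θ, 0 < Ψ θ) (hΨnorm : sIntR Ψ = 1)
    (hΛ : Λ.PosSemidef) (htr : Λ.trace = 1)
    (hq : ∀ θ, 0 < (quad A B Λ θ).re) :
    (Theta A B Ψ Λ).PosSemidef ∧ (Theta A B Ψ Λ).trace = 1 := by
  classical
  have hS : msqrt Λ = _ := dif_pos hΛ
  set S := msqrt Λ with hSdef
  have hSps : S.PosSemidef := msqrt_posSemidef hΛ
  have hSherm : Sᴴ = S := hSps.1
  have hSS : S * S = Λ := msqrt_mul_self hΛ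
  set f : ℝ → Mat n := fun θ => ((Ψ θ : ℂ) / quad A B Λ θ) •
    (S * (Gm A B θ * (Gm A B θ)ᴴ) * S) with hf
  have hqne : ∀ θ, quad A B Λ θ ≠ 0 := by
    intro θ h
    have := quad_eq_re A B hΛ θ
    rw [h] at this
    have h2 : (quad A B Λ θ).re = 0 := by rw [h]; simp
    exact absurd h2 (hq θ).ne'
  -- nonneg coefficient
  have hcoef : ∀ θ, 0 ≤ (Ψ θ : ℂ) / quad A B Λ θ := by
    intro θ
    rw [quad_eq_re A B hΛ θ, ← Complex.ofReal_div, Complex.zero_le_real]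
    exact div_nonneg (hΨpos θ).le (hq θ).le
  -- pointwise psd
  have hfps : ∀ θ, (f θ).PosSemidef := by
    intro θ
    refine smul_posSemidef (hcoef θ) ?_
    have := (Matrix.posSemidef_self_mul_conjTranspose (Gm A B θ)).mul_mul_conjTranspose_same S
    rwa [hSherm] at this
  -- continuity / integrability
  have hqc := continuous_quad A B Λ hA
  have hGc := continuous_Gm A B hA
  have hfc : Continuous f := by
    have hc : Continuous fun θ => (Ψ θ : ℂ) / quad A B Λ θ :=
      (Complex.continuous_ofReal.comp hΨc).div hqc hqne
    exact hc.smul ((continuous_const.matrix_mul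
      (hGc.matrix_mul hGc.matrix_conjTranspose)).matrix_mul continuous_const)
  have hi : ∀ i j, IntervalIntegrable (fun θ => f θ i j) MeasureTheory.volume 0 (2*π) :=
    fun i j => (hfc.matrix_elem i j).intervalIntegrable 0 (2*π)
  -- trace of integrand
  have htrf : ∀ θ, (f θ).trace = (Ψ θ : ℂ) := by
    intro θ
    rw [hf]
    rw [Matrix.trace_smul, Matrix.trace_mul_cycle, hSS, ← Matrix.mul_assoc,
      Matrix.trace_mul_cycle, Matrix.trace_fin_one, smul_eq_mul]
    have h00 : ((Gm A B θ)ᴴ * Λ * Gm A B θ) 0 0 = quad A B Λ θ := rfl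
    rw [h00, div_mul_cancel₀ _ (hqne θ)]
  have hTheta : Theta A B Ψ Λ = mInt f := by
    unfold Theta
    rw [hf, hSdef]
  constructor
  · rw [hTheta]
    exact mInt_posSemidef hi hfps
  · rw [hTheta, mInt_trace hi]
    have : (∫ θ in (0:ℝ)..(2*π), (f θ).trace) = (((∫ θ in (0:ℝ)..(2*π), Ψ θ) : ℝ) : ℂ) := by
      rw [← intervalIntegral.integral_ofReal]
      exact intervalIntegral.integral_congr fun θ _ => htrf θ
    rw [this, Complex.real_smul, ← Complex.ofReal_mul]
    have hnorm : (1/(2*π)) * ∫ θ in (0:ℝ)..(2*π), Ψ θ = 1 := hΨnorm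
    rw [hnorm, Complex.ofReal_one]
end
end

section
/- Define the linear map M: H_n → H_n by M(X) = X - Λ_∘^{1/2} [∫ (G Ψ G*/(G*Λ_∘G)) · (G*XG/(G*Λ_∘G))] Λ_∘^{1/2}, where Λ_∘ > 0 satisfies ∫ G(Ψ/(G*Λ_∘G))G* = I. Then tr(M(X)) = 0 for every Hermitian X. -/
open Matrix MeasureTheory Real Filter
open scoped ComplexOrder

noncomputable section

lemma Gm_cont {n : ℕ} (A : Mat n) (B : Vec n) (hA : IsStable A) :
    Continuous (Gm A B) := by
  have hc : Continuous fun θ => circPt θ • (1 : Mat n) - A := by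
    have : Continuous circPt := Complex.continuous_exp.comp (by continuity)
    exact (this.smul continuous_const).sub continuous_const
  have hdet : ∀ θ, (circPt θ • (1 : Mat n) - A).det ≠ 0 := by
    intro θ h0
    have hmem : circPt θ ∈ spectrum ℂ A := by
      rw [spectrum.mem_iff]
      intro hu
      rw [Algebra.algebraMap_eq_smul_one] at hu
      exact (by simp [h0] : ¬ IsUnit (circPt θ • (1 : Mat n) - A).det)
        ((Matrix.isUnit_iff_isUnit_det _).mp hu)
    have h1 : ‖circPt θ‖ < 1 := hA _ hmem
    have : ‖circPt θ‖ = 1 := Complex.norm_exp_ofReal_mul_I θ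
    linarith [this ▸ h1]
  have hinv : Continuous fun θ => (circPt θ • (1 : Mat n) - A)⁻¹ := by
    have : (fun θ => (circPt θ • (1 : Mat n) - A)⁻¹)
        = fun θ => ((circPt θ • (1 : Mat n) - A).det)⁻¹ •
            (circPt θ • (1 : Mat n) - A).adjugate := by
      funext θ
      rw [Matrix.inv_def, Ring.inverse_eq_inv']
    rw [this]
    exact ((hc.matrix_det).inv₀ hdet).smul hc.matrix_adjugate
  exact hinv.matrix_mul continuous_const

lemma trace_mInt_mul {n : ℕ} (f : ℝ → Mat n) (C : Mat n)
    (hf : ∀ i j, IntervalIntegrable (fun θ => f θ i j) volume 0 (2*π)) :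
    (mInt f * C).trace = sInt (fun θ => (f θ * C).trace) := by
  unfold mInt sInt
  simp only [Matrix.trace, Matrix.diag, Matrix.mul_apply, Matrix.of_apply]
  have h1 : ∀ i j : Fin n, ((1 / (2 * π) : ℝ) • ∫ θ in (0:ℝ)..(2 * π), f θ i j) * C j i
      = (1 / (2 * π) : ℝ) • ∫ θ in (0:ℝ)..(2 * π), f θ i j * C j i := by
    intro i j
    rw [smul_mul_assoc, intervalIntegral.integral_mul_const]
  simp only [h1, ← Finset.smul_sum]
  congr 1
  have h2 : ∀ i : Fin n, (∑ j : Fin n, ∫ θ in (0:ℝ)..(2 * π), f θ i j * C j i)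
      = ∫ θ in (0:ℝ)..(2 * π), ∑ j : Fin n, f θ i j * C j i := fun i =>
    (intervalIntegral.integral_finset_sum (fun j _ => (hf i j).mul_const (C j i))).symm
  simp only [h2]
  have h3 : ∀ i : Fin n, IntervalIntegrable (fun θ => ∑ j : Fin n, f θ i j * C j i)
      volume 0 (2 * π) := by
    intro i
    have := IntervalIntegrable.sum (μ := volume) (a := 0) (b := 2 * π) Finset.univ
      (f := fun j θ => f θ i j * C j i) (fun j _ => (hf i j).mul_const (C j i))
    have heq : (fun θ => ∑ j : Fin n, f θ i j * C j i)
        = ∑ j : Fin n, fun θ => f θ i j * C j i := by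
      funext θ; simp
    rw [heq]; exact this
  exact (intervalIntegral.integral_finset_sum
    (f := fun i θ => ∑ j : Fin n, f θ i j * C j i) (fun i _ => h3 i)).symm

/-- the linearization M of Θ at a fixed point Λ∘ > 0 is trace
annihilating: tr M(X) = 0 for every Hermitian X. -/
theorem stmt10 {n : ℕ} (A : Mat n) (B : Vec n) (Ψ : ℝ → ℝ) (Λ : Mat n)
    (hA : IsStable A) (hR : Reachable A B)
    (hΨc : Continuous Ψ) (hΨpos : ∀ θ, 0 < Ψ θ)
    (hΛ : Λ.PosDef)
    (hq : ∀ θ, 0 < (quad A B Λ θ).re)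
    (hmom : moment A B Ψ Λ = 1) :
    ∀ X : Mat n, X.IsHermitian → (Mlin A B Ψ Λ X).trace = 0 := by
  intro X hX
  have hG : Continuous (Gm A B) := Gm_cont A B hA
  have hGH : Continuous fun θ => (Gm A B θ)ᴴ := hG.matrix_conjTranspose
  have hGG : Continuous fun θ => Gm A B θ * (Gm A B θ)ᴴ := hG.matrix_mul hGH
  have entry00 : ∀ (Y : Mat n), Continuous fun θ => ((Gm A B θ)ᴴ * Y * Gm A B θ) 0 0 := by
    intro Y
    have h0 : Continuous fun θ => (Gm A B θ)ᴴ * Y * Gm A B θ :=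
      (hGH.matrix_mul continuous_const).matrix_mul hG
    exact (continuous_apply (0 : Fin 1)).comp ((continuous_apply (0 : Fin 1)).comp h0)
  have hquad : Continuous (quad A B Λ) := entry00 Λ
  have hqne : ∀ θ, quad A B Λ θ ≠ 0 := by
    intro θ h
    have := hq θ
    rw [h] at this
    simp at this
  set f1 : ℝ → Mat n := fun θ =>
    ((Ψ θ : ℂ) / quad A B Λ θ) • (Gm A B θ * (Gm A B θ)ᴴ) with hf1def
  set f2 : ℝ → Mat n := fun θ =>
    (((Ψ θ : ℂ) * (((Gm A B θ)ᴴ * X * Gm A B θ) 0 0)) / (quad A B Λ θ) ^ 2) •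
      (Gm A B θ * (Gm A B θ)ᴴ) with hf2def
  have hΨC : Continuous fun θ => (Ψ θ : ℂ) := Complex.continuous_ofReal.comp hΨc
  have hc1 : Continuous fun θ => (Ψ θ : ℂ) / quad A B Λ θ := hΨC.div hquad hqne
  have hc2 : Continuous fun θ =>
      ((Ψ θ : ℂ) * (((Gm A B θ)ᴴ * X * Gm A B θ) 0 0)) / (quad A B Λ θ) ^ 2 :=
    (hΨC.mul (entry00 X)).div (hquad.pow 2) (fun θ => pow_ne_zero 2 (hqne θ))
  have hf1 : ∀ i j, IntervalIntegrable (fun θ => f1 θ i j) volume 0 (2*π) := by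
    intro i j
    have : Continuous fun θ => f1 θ i j := by
      simp only [hf1def, Matrix.smul_apply, smul_eq_mul]
      exact hc1.mul ((continuous_apply j).comp ((continuous_apply i).comp hGG))
    exact this.intervalIntegrable _ _
  have hf2 : ∀ i j, IntervalIntegrable (fun θ => f2 θ i j) volume 0 (2*π) := by
    intro i j
    have : Continuous fun θ => f2 θ i j := by
      simp only [hf2def, Matrix.smul_apply, smul_eq_mul]
      exact hc2.mul ((continuous_apply j).comp ((continuous_apply i).comp hGG))
    exact this.intervalIntegrable _ _
  have hsq : msqrt Λ * msqrt Λ = Λ := by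
    have hS := hΛ.posSemidef
    rw [msqrt, dif_pos hS]
    have hU : (star hS.1.eigenvectorUnitary : Mat n) * hS.1.eigenvectorUnitary.1 = 1 :=
      hS.1.eigenvectorUnitary.2.1
    calc _ = hS.1.eigenvectorUnitary.1 * (diagonal ((↑) ∘ (√·) ∘ hS.1.eigenvalues) *
          ((star hS.1.eigenvectorUnitary : Mat n) * hS.1.eigenvectorUnitary.1) *
          diagonal ((↑) ∘ (√·) ∘ hS.1.eigenvalues)) * (star hS.1.eigenvectorUnitary : Mat n) := by
          simp only [Matrix.mul_assoc]
      _ = hS.1.eigenvectorUnitary.1 * diagonal ((↑) ∘ hS.1.eigenvalues) *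
          (star hS.1.eigenvectorUnitary : Mat n) := by
          rw [hU, Matrix.mul_one, diagonal_mul_diagonal]
          congr 2
          funext i
          congr 1
          funext i
          simp [← Complex.ofReal_mul, Real.mul_self_sqrt (hS.eigenvalues_nonneg i)]
      _ = Λ := by
          conv_rhs => rw [hS.1.spectral_theorem]
          simp [Matrix.mul_assoc]
  unfold Mlin
  rw [Matrix.trace_sub]
  have h2 : (msqrt Λ * mInt f2 * msqrt Λ).trace = (mInt f2 * Λ).trace := by
    rw [Matrix.trace_mul_cycle, hsq, Matrix.trace_mul_comm]
  rw [h2]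
  have h1 : X.trace = (mInt f1 * X).trace := by
    conv_lhs => rw [← one_mul X, ← hmom]
    rfl
  rw [h1, trace_mInt_mul f1 X hf1, trace_mInt_mul f2 Λ hf2, sub_eq_zero]
  apply congrArg
  funext θ
  have key : ∀ (Y : Mat n),
      (Gm A B θ * (Gm A B θ)ᴴ * Y).trace = ((Gm A B θ)ᴴ * Y * Gm A B θ) 0 0 := by
    intro Y
    have hcomm := Matrix.trace_mul_comm ((Gm A B θ)ᴴ * Y) (Gm A B θ)
    rw [Matrix.mul_assoc, ← hcomm, Matrix.trace_fin_one]
  simp only [hf1def, hf2def, Matrix.smul_mul, Matrix.trace_smul, smul_eq_mul, key]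
  have hq0 := hqne θ
  rw [show ((Gm A B θ)ᴴ * Λ * Gm A B θ) 0 0 = quad A B Λ θ from rfl]
  field_simp
end
end
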